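/- For every real x with 0 < x ≤ 1, I_{−1/2}(x) + I_{3/2}(x) < 4.146·x^{−1/2}·e^{−x}; explicitly, √(2/(π·x))·(2·cosh(x) − sinh(x)/x) < 4.146·x^{−1/2}·e^{−x}. -/

import Mathlib

open Real

lemma concave_aux : ConcaveOn ℝ (Set.Icc (0:ℝ) 2)
    (fun t => (Real.exp 2 + 1) / 2 * t - (t - 1) * Real.exp t - 1) := by
  apply concaveOn_of_hasDerivWithinAt2_nonpos (f' := fun t => (Real.exp 2 + 1) / 2 - t * Real.exp t)
    (f'' := fun t => -((t + 1) * Real.exp t)) (convex_Icc 0 2)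
  · fun_prop
  · intro t ht
    have : HasDerivAt (fun t => (Real.exp 2 + 1) / 2 * t - (t - 1) * Real.exp t - 1)
        ((Real.exp 2 + 1) / 2 - t * Real.exp t) t := by
      have h1 : HasDerivAt (fun t : ℝ => (t - 1) * Real.exp t)
          (1 * Real.exp t + (t - 1) * Real.exp t) t :=
        ((hasDerivAt_id t).sub_const 1).mul (Real.hasDerivAt_exp t)
      have h2 : HasDerivAt (fun t : ℝ => (Real.exp 2 + 1) / 2 * t)
          ((Real.exp 2 + 1) / 2) t := by
        simpa using (hasDerivAt_id t).const_mul ((Real.exp 2 + 1) / 2)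
      have := (h2.sub h1).sub_const 1
      refine this.congr_deriv ?_
      ring
    exact this.hasDerivWithinAt
  · intro t ht
    have : HasDerivAt (fun t : ℝ => (Real.exp 2 + 1) / 2 - t * Real.exp t)
        (-((t + 1) * Real.exp t)) t := by
      have h1 : HasDerivAt (fun t : ℝ => t * Real.exp t)
          (1 * Real.exp t + t * Real.exp t) t :=
        (hasDerivAt_id t).mul (Real.hasDerivAt_exp t)
      have := (hasDerivAt_const t ((Real.exp 2 + 1) / 2)).sub h1
      refine this.congr_deriv ?_
      ring
    exact this.hasDerivWithinAt
  · intro t ht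
    rw [interior_Icc] at ht
    have := Real.exp_pos t
    nlinarith [ht.1]

lemma key_bound (t : ℝ) (ht0 : 0 < t) (ht2 : t ≤ 2) :
    Real.exp t + 1 - (Real.exp t - 1) / t ≤ (Real.exp 2 + 3) / 2 := by
  have h : 0 ≤ (Real.exp 2 + 1) / 2 * t - (t - 1) * Real.exp t - 1 := by
    have hmem0 : (0:ℝ) ∈ Set.Icc (0:ℝ) 2 := by constructor <;> norm_num
    have hmem2 : (2:ℝ) ∈ Set.Icc (0:ℝ) 2 := by constructor <;> norm_num
    have ha : 0 ≤ 1 - t / 2 := by linarith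
    have hb : 0 ≤ t / 2 := by linarith
    have hab : (1 - t / 2) + t / 2 = 1 := by ring
    have := concave_aux.2 hmem0 hmem2 ha hb hab
    simp only [smul_eq_mul] at this
    have ht : (1 - t/2) * 0 + t/2 * 2 = t := by ring
    rw [ht] at this
    simp [Real.exp_zero] at this
    linarith [this]
  have key : (Real.exp t + 1) * t - (Real.exp t - 1) ≤ (Real.exp 2 + 3) / 2 * t := by
    nlinarith [h]
  calc Real.exp t + 1 - (Real.exp t - 1) / t
      = ((Real.exp t + 1) * t - (Real.exp t - 1)) / t := by field_simp
    _ ≤ ((Real.exp 2 + 3) / 2 * t) / t := by gcongr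
    _ = (Real.exp 2 + 3) / 2 := by field_simp

theorem bessel_I_sum_bound_small (x : ℝ) (h0 : 0 < x) (h1 : x ≤ 1) :
    Real.sqrt (2 / (π * x)) * (2 * Real.cosh x - Real.sinh x / x) <
      4.146 * x ^ (-(1 : ℝ) / 2) * Real.exp (-x) := by
  have hsx : 0 < Real.sqrt x := Real.sqrt_pos.mpr h0
  have hrpow : x ^ (-(1 : ℝ) / 2) = (Real.sqrt x)⁻¹ := by
    rw [show (-(1:ℝ)/2) = -(1/2) by ring, Real.rpow_neg h0.le, ← Real.sqrt_eq_rpow]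
  have hsplit : Real.sqrt (2 / (π * x)) = Real.sqrt (2 / π) * (Real.sqrt x)⁻¹ := by
    rw [← div_div, Real.sqrt_div (by positivity : (0:ℝ) ≤ 2 / π), div_eq_mul_inv]
  rw [hrpow, hsplit]
  have hmain : Real.sqrt (2 / π) * (2 * Real.cosh x - Real.sinh x / x) <
      4.146 * Real.exp (-x) := by
    have hex : 0 < Real.exp x := Real.exp_pos x
    rw [← mul_lt_mul_iff_left₀ hex]
    have hexpx : Real.exp (-x) * Real.exp x = 1 := by
      rw [← Real.exp_add]; simp
    have hA : (2 * Real.cosh x - Real.sinh x / x) * Real.exp x =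
        Real.exp (2 * x) + 1 - (Real.exp (2 * x) - 1) / (2 * x) := by
      rw [Real.cosh_eq, Real.sinh_eq]
      have h2x : Real.exp (2 * x) = Real.exp x * Real.exp x := by
        rw [← Real.exp_add]; ring_nf
      have hinv : Real.exp (-x) * Real.exp x = 1 := hexpx
      field_simp
      nlinarith [h2x, hinv]
    have hkey := key_bound (2 * x) (by linarith) (by linarith)
    have hnum : Real.sqrt (2 / π) * ((Real.exp 2 + 3) / 2) < 4.146 := by
      have he2 : Real.exp 2 = Real.exp 1 * Real.exp 1 := by
        rw [← Real.exp_add]; norm_num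
      have heu : Real.exp 1 < 2.7182818286 := Real.exp_one_lt_d9
      have hel : (2:ℝ) < Real.exp 1 := by
        have := Real.add_one_le_exp 1
        nlinarith [Real.exp_one_gt_d9]
      have hs : Real.sqrt (2 / π) < 8.292 / (Real.exp 2 + 3) := by
        rw [Real.sqrt_lt' (by positivity)]
        rw [div_pow, div_lt_div_iff₀ Real.pi_pos (by positivity)]
        have hpi := Real.pi_gt_d6
        have he2u : Real.exp 2 < 2.7182818286 ^ 2 := by nlinarith
        have h3 : (Real.exp 2 + 3) ^ 2 < (2.7182818286 ^ 2 + 3) ^ 2 := by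
          nlinarith [Real.exp_pos 2]
        nlinarith [h3, hpi]
      have hpos : (0:ℝ) < (Real.exp 2 + 3) / 2 := by positivity
      calc Real.sqrt (2 / π) * ((Real.exp 2 + 3) / 2)
          < 8.292 / (Real.exp 2 + 3) * ((Real.exp 2 + 3) / 2) := by
            exact mul_lt_mul_of_pos_right hs hpos
        _ = 4.146 := by
            field_simp
            ring
    calc Real.sqrt (2 / π) * (2 * Real.cosh x - Real.sinh x / x) * Real.exp x
        = Real.sqrt (2 / π) * (Real.exp (2 * x) + 1 - (Real.exp (2 * x) - 1) / (2 * x)) := by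
          rw [mul_assoc, hA]
      _ ≤ Real.sqrt (2 / π) * ((Real.exp 2 + 3) / 2) := by
          exact mul_le_mul_of_nonneg_left hkey (Real.sqrt_nonneg _)
      _ < 4.146 := hnum
      _ = 4.146 * Real.exp (-x) * Real.exp x := by
          rw [mul_assoc, hexpx, mul_one]
  calc Real.sqrt (2 / π) * (Real.sqrt x)⁻¹ * (2 * Real.cosh x - Real.sinh x / x)
      = (Real.sqrt x)⁻¹ * (Real.sqrt (2 / π) * (2 * Real.cosh x - Real.sinh x / x)) := by ring
    _ < (Real.sqrt x)⁻¹ * (4.146 * Real.exp (-x)) := by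
        exact mul_lt_mul_of_pos_left hmain (by positivity)
    _ = 4.146 * (Real.sqrt x)⁻¹ * Real.exp (-x) := by ring
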